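/- (Inversion property of Q.) Let β be a (φ, ℓ)-quasiperiodic family and define β⁻ by β⁻_t := β_{−t}. Then β⁻ is quasiperiodic for the gauge datum (φ⁻¹, −r), where r = φ∘ℓ (i.e. β⁻_{t+1} = φ⁻¹∘β⁻_t − (−φ⁻¹∘r)), and for all x, y ∈ E: Q(β⁻)(x, y) = −Q(β)(x, y), where Q(β⁻) is taken with respect to the gauge datum (φ⁻¹, −r). -/

import Mathlib

/-- `(a ∧_B b)(x, y) = B(a x, b y) - B(a y, b x)` for maps `a, b : E → 𝔤`. -/
def wedgeB {𝔤 E : Type*} [NormedAddCommGroup 𝔤] [NormedSpace ℝ 𝔤]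
    [AddCommGroup E] [Module ℝ E]
    (B : 𝔤 →ₗ[ℝ] 𝔤 →ₗ[ℝ] ℝ) (a b : E → 𝔤) (x y : E) : ℝ :=
  B (a x) (b y) - B (a y) (b x)

/-- A `(φ, r)`-quasiperiodic family of linear maps `E → 𝔤`: smooth in `t` and
`β (t+1) = φ ∘ β t - r`. -/
def QuasiPeriodic {𝔤 E : Type*} [NormedAddCommGroup 𝔤] [NormedSpace ℝ 𝔤]
    [AddCommGroup E] [Module ℝ E]
    (φ : 𝔤 → 𝔤) (r : E → 𝔤) (β : ℝ → E →ₗ[ℝ] 𝔤) : Prop :=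
  (∀ x : E, ContDiff ℝ (⊤ : ℕ∞) (fun t => β t x)) ∧
  ∀ (t : ℝ) (x : E), β (t + 1) x = φ (β t x) - r x

/-- The functional `Q(β)(x,y) = (1/2)(ℓ ∧_B β_0)(x,y) + (1/2)∫₀¹ (β_t ∧_B β̇_t)(x,y) dt`. -/
noncomputable def Qfun {𝔤 E : Type*} [NormedAddCommGroup 𝔤] [NormedSpace ℝ 𝔤]
    [AddCommGroup E] [Module ℝ E]
    (B : 𝔤 →ₗ[ℝ] 𝔤 →ₗ[ℝ] ℝ) (ℓ : E → 𝔤) (β : ℝ → E → 𝔤) (x y : E) : ℝ :=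
  (1/2 : ℝ) * wedgeB B ℓ (β 0) x y
    + (1/2 : ℝ) * ∫ t in (0:ℝ)..1,
        wedgeB B (β t) (fun e => deriv (fun s => β s e) t) x y

/-- inversion property of `Q`: for a `(φ, ℓ)`-quasiperiodic family
`β` and `β⁻_t := β_{-t}`, the family `β⁻` is quasiperiodic for the gauge datum
`(φ⁻¹, -r)` with `r = φ∘ℓ` (i.e. `β⁻_{t+1} = φ⁻¹ ∘ β⁻_t - (-(φ⁻¹∘r))`), and
`Q(β⁻) = -Q(β)` where `Q(β⁻)` is taken with respect to `(φ⁻¹, -r)`. -/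
theorem Q_inversion
    {𝔤 E : Type*} [NormedAddCommGroup 𝔤] [NormedSpace ℝ 𝔤] [FiniteDimensional ℝ 𝔤]
    [AddCommGroup E] [Module ℝ E]
    (br : 𝔤 →ₗ[ℝ] 𝔤 →ₗ[ℝ] 𝔤)
    (br_alt : ∀ x : 𝔤, br x x = 0)
    (br_jacobi : ∀ x y z : 𝔤, br (br x y) z + br (br y z) x + br (br z x) y = 0)
    (B : 𝔤 →ₗ[ℝ] 𝔤 →ₗ[ℝ] ℝ)
    (B_symm : ∀ x y : 𝔤, B x y = B y x)
    (B_inv : ∀ x y z : 𝔤, B (br x y) z = B x (br y z))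
    (φ : 𝔤 ≃ₗ[ℝ] 𝔤)
    (hφbr : ∀ x y : 𝔤, φ (br x y) = br (φ x) (φ y))
    (hφB : ∀ x y : 𝔤, B (φ x) (φ y) = B x y)
    (ℓ : E →ₗ[ℝ] 𝔤)
    (β : ℝ → E →ₗ[ℝ] 𝔤)
    (hβ : QuasiPeriodic ⇑φ (fun x => φ (ℓ x)) β) :
    QuasiPeriodic ⇑φ.symm (fun x => -(φ.symm (φ (ℓ x)))) (fun t => β (-t)) ∧
    ∀ x y : E,
      Qfun B (fun e => -(φ (ℓ e))) (fun t => ⇑(β (-t))) x y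
        = - Qfun B ⇑ℓ (fun t => ⇑(β t)) x y := by
  obtain ⟨hsm, hqp⟩ := hβ
  have hd : ∀ e, Differentiable ℝ (fun t => β t e) := fun e => (hsm e).differentiable (by simp)
  set D : ℝ → E → 𝔤 := fun t e => deriv (fun s => β s e) t with hDdef
  have hDc : ∀ e, Continuous fun t => D t e := fun e => (hsm e).continuous_deriv (by simp)
  -- continuous linear versions
  let Bc : 𝔤 →L[ℝ] 𝔤 →L[ℝ] ℝ :=
    LinearMap.toContinuousLinearMap
      ((LinearMap.toContinuousLinearMap : (𝔤 →ₗ[ℝ] ℝ) ≃ₗ[ℝ] (𝔤 →L[ℝ] ℝ)).toLinearMap ∘ₗ B)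
  have hBc : ∀ a b, Bc a b = B a b := fun _ _ => rfl
  let ψ : 𝔤 →L[ℝ] 𝔤 := LinearMap.toContinuousLinearMap (φ.symm : 𝔤 →ₗ[ℝ] 𝔤)
  have hψ : ∀ a, ψ a = φ.symm a := fun _ => rfl
  -- invariance of B under φ.symm and mixed form
  have hψB : ∀ a b : 𝔤, B (φ.symm a) (φ.symm b) = B a b := by
    intro a b
    have := hφB (φ.symm a) (φ.symm b)
    simpa using this.symm
  have hφψB : ∀ a b : 𝔤, B (φ a) b = B a (φ.symm b) := by
    intro a b
    conv_lhs => rw [show b = φ (φ.symm b) by simp]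
    exact hφB a (φ.symm b)
  -- basic shift identities
  have h2 : ∀ (t : ℝ) (e : E), β (t - 1) e = φ.symm (β t e) + ℓ e := by
    intro t e
    have h := hqp (t - 1) e
    rw [sub_add_cancel] at h
    rw [h]
    simp
  have h1 : ∀ (t : ℝ) (e : E), deriv (fun s => β (-s) e) t = -(D (-t) e) := by
    intro t e
    exact deriv_comp_neg (fun s => β s e) t
  have h3 : ∀ (t : ℝ) (e : E), D (t - 1) e = φ.symm (D t e) := by
    intro t e
    have heq : (fun s : ℝ => β (s - 1) e) = fun s => ψ (β s e) + ℓ e := by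
      funext s; rw [h2 s e]; rfl
    have hder : HasDerivAt (fun s : ℝ => ψ (β s e) + ℓ e) (ψ (D t e)) t :=
      (ψ.hasFDerivAt.comp_hasDerivAt t (hd e t).hasDerivAt).add_const _
    have : deriv (fun s : ℝ => β (s - 1) e) t = ψ (D t e) := by
      rw [heq]; exact hder.deriv
    rw [← hψ (D t e), ← this]
    exact (deriv_comp_sub_const (fun s => β s e) 1 t).symm
  -- part 1: quasiperiodicity of the inverted family
  have part1 : QuasiPeriodic ⇑φ.symm (fun x => -(φ.symm (φ (ℓ x)))) (fun t => β (-t)) := by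
    constructor
    · intro x
      exact (hsm x).comp contDiff_neg
    · intro t x
      have h := h2 (-t) x
      have : (-t : ℝ) - 1 = -(t + 1) := by ring
      rw [this] at h
      rw [h]
      simp
  refine ⟨part1, fun x y => ?_⟩
  -- notation
  set F : ℝ → ℝ := fun t => wedgeB B (β t) (fun e => D t e) x y with hF
  set W : ℝ := wedgeB B ℓ (β 0) x y with hW
  set G : ℝ → ℝ := fun t => B (ℓ x) (φ.symm (β t y)) - B (ℓ y) (φ.symm (β t x)) with hGdef
  -- continuity facts
  have hBcc : ∀ (a b : ℝ → 𝔤), Continuous a → Continuous b →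
      Continuous fun t => B (a t) (b t) := by
    intro a b ha hb
    have : Continuous fun t => Bc (a t) (b t) := Bc.continuous₂.comp (ha.prodMk hb)
    simpa [hBc] using this
  have hFc : Continuous F := by
    apply Continuous.sub
    · exact hBcc _ _ (hsm x).continuous (hDc y)
    · exact hBcc _ _ (hsm y).continuous (hDc x)
  have hG'c : Continuous fun t => B (ℓ x) (φ.symm (D t y)) - B (ℓ y) (φ.symm (D t x)) := by
    apply Continuous.sub
    · exact hBcc _ _ continuous_const (ψ.continuous.comp (hDc y))
    · exact hBcc _ _ continuous_const (ψ.continuous.comp (hDc x))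
  -- FTC for G
  have hGder : ∀ t : ℝ, HasDerivAt G (B (ℓ x) (φ.symm (D t y)) - B (ℓ y) (φ.symm (D t x))) t := by
    intro t
    have hy : HasDerivAt (fun t => Bc (ℓ x) (ψ (β t y))) (Bc (ℓ x) (ψ (D t y))) t :=
      ((Bc (ℓ x)).comp ψ).hasFDerivAt.comp_hasDerivAt t (hd y t).hasDerivAt
    have hx : HasDerivAt (fun t => Bc (ℓ y) (ψ (β t x))) (Bc (ℓ y) (ψ (D t x))) t :=
      ((Bc (ℓ y)).comp ψ).hasFDerivAt.comp_hasDerivAt t (hd x t).hasDerivAt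
    have := hy.sub hx
    simp only [hBc, hψ] at this; exact this
  have hFTC : (∫ t in (0:ℝ)..1, (B (ℓ x) (φ.symm (D t y)) - B (ℓ y) (φ.symm (D t x))))
      = G 1 - G 0 := by
    exact intervalIntegral.integral_eq_sub_of_hasDerivAt
      (fun t _ => hGder t) (hG'c.intervalIntegrable 0 1)
  -- value of G at 1 and relation of the ℓ-term to G 0
  have hβ1 : ∀ e : E, φ.symm (β 1 e) = β 0 e - ℓ e := by
    intro e
    have h := hqp 0 e
    rw [zero_add] at h
    rw [h]
    simp
  have hG1 : G 1 = W := by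
    simp only [hGdef, hβ1, hW, wedgeB, map_sub]
    rw [B_symm (ℓ y) (ℓ x)]
    ring
  have hLterm : wedgeB B (fun e => -(φ (ℓ e))) (⇑(β (-(0:ℝ)))) x y = -G 0 := by
    simp only [wedgeB, hGdef, neg_zero, map_neg, LinearMap.neg_apply]
    rw [hφψB (ℓ x) (β 0 y), hφψB (ℓ y) (β 0 x)]
    ring
  -- the shifted integrand
  have hFshift : ∀ t : ℝ, F (t - 1)
      = F t + (B (ℓ x) (φ.symm (D t y)) - B (ℓ y) (φ.symm (D t x))) := by
    intro t
    simp only [hF, wedgeB, h2, h3, map_add, LinearMap.add_apply]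
    rw [hψB (β t x) (D t y), hψB (β t y) (D t x)]
    ring
  -- compute the integral of the inverted family
  have hIcalc : (∫ t in (0:ℝ)..1,
      wedgeB B (⇑(β (-t))) (fun e => deriv (fun s => β (-s) e) t) x y)
      = -(∫ t in (0:ℝ)..1, F t) - W + G 0 := by
    have step1 : ∀ t : ℝ,
        wedgeB B (⇑(β (-t))) (fun e => deriv (fun s => β (-s) e) t) x y = -(F (-t)) := by
      intro t
      simp only [wedgeB, h1, map_neg, hF]
      ring
    calc (∫ t in (0:ℝ)..1,
        wedgeB B (⇑(β (-t))) (fun e => deriv (fun s => β (-s) e) t) x y)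
        = ∫ t in (0:ℝ)..1, -(F (-t)) := by
          exact intervalIntegral.integral_congr (fun t _ => step1 t)
      _ = -(∫ t in (0:ℝ)..1, F (-t)) := by rw [intervalIntegral.integral_neg]
      _ = -(∫ t in (-1:ℝ)..0, F t) := by
          rw [intervalIntegral.integral_comp_neg]
          norm_num
      _ = -(∫ t in (0:ℝ)..1, F (t - 1)) := by
          rw [intervalIntegral.integral_comp_sub_right F 1]
          norm_num
      _ = -(∫ t in (0:ℝ)..1,
            (F t + (B (ℓ x) (φ.symm (D t y)) - B (ℓ y) (φ.symm (D t x))))) := by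
          rw [intervalIntegral.integral_congr (fun t _ => hFshift t)]
      _ = -((∫ t in (0:ℝ)..1, F t)
            + ∫ t in (0:ℝ)..1, (B (ℓ x) (φ.symm (D t y)) - B (ℓ y) (φ.symm (D t x)))) := by
          rw [intervalIntegral.integral_add (hFc.intervalIntegrable 0 1)
            (hG'c.intervalIntegrable 0 1)]
      _ = -(∫ t in (0:ℝ)..1, F t) - W + G 0 := by
          rw [hFTC, hG1]; ring
  -- assemble
  show (1/2 : ℝ) * wedgeB B (fun e => -(φ (ℓ e))) (⇑(β (-(0:ℝ)))) x y
      + (1/2 : ℝ) * (∫ t in (0:ℝ)..1,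
          wedgeB B (⇑(β (-t))) (fun e => deriv (fun s => β (-s) e) t) x y)
    = -((1/2 : ℝ) * W + (1/2 : ℝ) * ∫ t in (0:ℝ)..1, F t)
  rw [hLterm, hIcalc]
  ring
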